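/- Fix α > 2, ε > 0, r = (1+ε)^{-1/α}, β = 1, 𝒩 = 1. There exists a constant d (depending only on α, ε) such that: if A is a finite set of at most n transmitters that is d·d_α(n)-diluted with respect to the grid of side x = γ/c (γ = r/√2, c ≥ 2 an integer) with at most one transmitter per box, then for every v ∈ A and every point u with dist(v,u) ≤ 2r/c, the SINR inequality (2r/c)^{-α} ≥ 𝒩 + ∑_{w∈A∖{v}} dist(w,u)^{-α} holds; i.e., every transmitter in A is (2r/c)-successful when all of A transmits simultaneously with unit power. -/

import Mathlib

noncomputable def dist2 (p q : ℝ × ℝ) : ℝ :=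
  Real.sqrt ((p.1 - q.1) ^ 2 + (p.2 - q.2) ^ 2)

noncomputable def boxIdx (x : ℝ) (p : ℝ × ℝ) : ℤ × ℤ :=
  (⌊p.1 / x⌋, ⌊p.2 / x⌋)

private lemma dist2_eq_dist (p q : ℝ × ℝ) :
    dist2 p q = dist ((WithLp.equiv 2 (Fin 2 → ℝ)).symm ![p.1, p.2])
      ((WithLp.equiv 2 (Fin 2 → ℝ)).symm ![q.1, q.2]) := by
  rw [EuclideanSpace.dist_eq]
  simp [dist2, Fin.sum_univ_two, Real.dist_eq, sq_abs]

private lemma dist2_triangle (a b c : ℝ × ℝ) : dist2 a c ≤ dist2 a b + dist2 b c := by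
  rw [dist2_eq_dist, dist2_eq_dist, dist2_eq_dist]
  exact dist_triangle _ _ _

private lemma dist2_comm (p q : ℝ × ℝ) : dist2 p q = dist2 q p := by
  unfold dist2; ring_nf

private lemma abs_fst_le_dist2 (p q : ℝ × ℝ) : |p.1 - q.1| ≤ dist2 p q := by
  rw [← Real.sqrt_sq_eq_abs]
  exact Real.sqrt_le_sqrt (by nlinarith [sq_nonneg (p.2 - q.2)])

private lemma abs_snd_le_dist2 (p q : ℝ × ℝ) : |p.2 - q.2| ≤ dist2 p q := by
  rw [← Real.sqrt_sq_eq_abs]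
  exact Real.sqrt_le_sqrt (by nlinarith [sq_nonneg (p.1 - q.1)])

private lemma floor_gap (s t : ℝ) : ((|⌊s⌋ - ⌊t⌋| : ℤ) : ℝ) ≤ |s - t| + 1 := by
  have h1 := Int.floor_le s
  have h2 := Int.floor_le t
  have h3 := Int.sub_one_lt_floor s
  have h4 := Int.sub_one_lt_floor t
  have h5 := le_abs_self (s - t)
  have h6 := neg_abs_le (s - t)
  push_cast
  rw [abs_le]
  constructor <;> linarith

private lemma hker_summable {α : ℝ} (hα : 2 < α) :
    Summable (fun k : ℤ => ((|k| : ℝ) + 1) ^ (-(α/2))) := by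
  have hnat : Summable (fun n : ℕ => ((n : ℝ) + 1) ^ (-(α/2))) := by
    have h0 : Summable (fun n : ℕ => (n : ℝ) ^ (-(α/2))) :=
      Real.summable_nat_rpow.mpr (by linarith)
    have := (summable_nat_add_iff (f := fun n : ℕ => (n : ℝ) ^ (-(α/2))) 1).mpr h0
    convert this using 2 with n
    · rfl
    · push_cast; rfl
  apply Summable.of_nat_of_neg <;> · convert hnat using 2 with n; rfl; norm_num

set_option maxHeartbeats 800000 in
theorem stmt_5 (α ε : ℝ) (hα : 2 < α) (hε : 0 < ε) :
    ∃ d : ℝ, 0 < d ∧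
      ∀ n : ℕ, ∀ c : ℕ, 2 ≤ c → ∀ D : ℕ,
      (D : ℝ) ≥ d * (∑ i ∈ Finset.Icc 1 n, (i : ℝ) ^ (1 - α)) →
      ∀ A : Finset (ℝ × ℝ), A.card ≤ n →
      (∀ p ∈ A, ∀ q ∈ A,
        (D : ℤ) ∣ ((boxIdx ((1 + ε) ^ (-(1 / α)) / (Real.sqrt 2 * c)) p).1 -
                   (boxIdx ((1 + ε) ^ (-(1 / α)) / (Real.sqrt 2 * c)) q).1) ∧
        (D : ℤ) ∣ ((boxIdx ((1 + ε) ^ (-(1 / α)) / (Real.sqrt 2 * c)) p).2 -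
                   (boxIdx ((1 + ε) ^ (-(1 / α)) / (Real.sqrt 2 * c)) q).2)) →
      (∀ p ∈ A, ∀ q ∈ A,
        boxIdx ((1 + ε) ^ (-(1 / α)) / (Real.sqrt 2 * c)) p =
          boxIdx ((1 + ε) ^ (-(1 / α)) / (Real.sqrt 2 * c)) q → p = q) →
      ∀ v ∈ A, ∀ u : ℝ × ℝ,
        dist2 v u ≤ 2 * (1 + ε) ^ (-(1 / α)) / c →
        (2 * (1 + ε) ^ (-(1 / α)) / c) ^ (-α) ≥
          1 + ∑ w ∈ A.erase v, (dist2 w u) ^ (-α) := by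
  have hα0 : (0:ℝ) < α := by linarith
  set hk : ℤ → ℝ := fun k => ((|k| : ℝ) + 1) ^ (-(α/2)) with hkdef
  have hkpos : ∀ k, 0 ≤ hk k := fun k => Real.rpow_nonneg (by positivity) _
  have hsum : Summable hk := hker_summable hα
  set K : ℝ := max 1 (∑' k : ℤ, hk k) with hKdef
  have hK1 : (1:ℝ) ≤ K := le_max_left _ _
  have hK0 : (0:ℝ) < K := by linarith
  have hfinsum : ∀ T : Finset ℤ, ∑ k ∈ T, hk k ≤ K :=
    fun T => le_trans (Summable.sum_le_tsum T (fun k _ => hkpos k) hsum) (le_max_right _ _)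
  have hq : (0:ℝ) < K^2 * (1+ε)/ε := by positivity
  set d : ℝ := max 12 (8 * Real.sqrt 2 * (K^2*(1+ε)/ε) ^ (1/α)) with hddef
  have hd12 : (12:ℝ) ≤ d := le_max_left _ _
  refine ⟨d, by linarith, ?_⟩
  intro n c hc D hD A hcard hdil hinj v hv u hu
  set r : ℝ := (1 + ε) ^ (-(1 / α)) with hrdef
  set x : ℝ := r / (Real.sqrt 2 * (c:ℝ)) with hxdef
  have hcR : (2:ℝ) ≤ (c:ℝ) := by exact_mod_cast hc
  have hc0 : (0:ℝ) < (c:ℝ) := by linarith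
  have hr0 : (0:ℝ) < r := Real.rpow_pos_of_pos (by linarith) _
  have hs0 : (0:ℝ) < Real.sqrt 2 := Real.sqrt_pos.mpr (by norm_num)
  have hs2 : Real.sqrt 2 ≤ 1.5 := by
    rw [show (1.5:ℝ) = Real.sqrt (1.5^2) from (Real.sqrt_sq (by norm_num)).symm]
    exact Real.sqrt_le_sqrt (by norm_num)
  have hx0 : (0:ℝ) < x := by rw [hxdef]; positivity
  -- D is large
  have hn1 : 1 ≤ n := le_trans (Finset.card_pos.mpr ⟨v, hv⟩) hcard
  have hS1 : (1:ℝ) ≤ ∑ i ∈ Finset.Icc 1 n, (i : ℝ) ^ (1 - α) := by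
    have := Finset.single_le_sum (f := fun i : ℕ => (i:ℝ)^(1-α))
      (fun i _ => Real.rpow_nonneg (Nat.cast_nonneg i) _)
      (Finset.mem_Icc.mpr ⟨le_refl 1, hn1⟩)
    simpa using this
  have hdD : d ≤ (D:ℝ) := by
    calc d = d * 1 := (mul_one d).symm
      _ ≤ d * ∑ i ∈ Finset.Icc 1 n, (i : ℝ) ^ (1 - α) :=
          mul_le_mul_of_nonneg_left hS1 (by linarith)
      _ ≤ (D:ℝ) := hD
  have hD12 : (12:ℝ) ≤ (D:ℝ) := le_trans hd12 hdD
  have hD0 : (0:ℝ) < (D:ℝ) := by linarith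
  have hDZ : (0:ℤ) < (D:ℤ) := by exact_mod_cast (by exact_mod_cast hD0 : (0:ℕ) < D)
  -- relate 2r/c and x
  have hLx : 2 * r / (c:ℝ) = 2 * Real.sqrt 2 * x := by
    rw [hxdef]; field_simp
  have hu' : dist2 v u ≤ 2 * Real.sqrt 2 * x := by rw [← hLx]; exact hu
  -- the index map
  set m : ℝ × ℝ → ℤ × ℤ := fun w =>
    (((boxIdx x w).1 - (boxIdx x v).1) / (D:ℤ), ((boxIdx x w).2 - (boxIdx x v).2) / (D:ℤ))
    with hmdef
  have hmmul : ∀ w ∈ A, (m w).1 * (D:ℤ) = (boxIdx x w).1 - (boxIdx x v).1 ∧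
      (m w).2 * (D:ℤ) = (boxIdx x w).2 - (boxIdx x v).2 := by
    intro w hwA
    obtain ⟨hd1, hd2⟩ := hdil w hwA v hv
    exact ⟨Int.ediv_mul_cancel hd1, Int.ediv_mul_cancel hd2⟩
  -- per-term bound
  have key : ∀ w ∈ A.erase v,
      dist2 w u ^ (-α) ≤ ((D:ℝ)*x/4) ^ (-α) * (hk (m w).1 * hk (m w).2) := by
    intro w hw
    obtain ⟨hwv, hwA⟩ := Finset.mem_erase.mp hw
    obtain ⟨e1, e2⟩ := hmmul w hwA
    set m1 : ℤ := (m w).1 with hm1def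
    set m2 : ℤ := (m w).2 with hm2def
    have hmne : m1 ≠ 0 ∨ m2 ≠ 0 := by
      by_contra hcon
      push_neg at hcon
      obtain ⟨h1, h2⟩ := hcon
      rw [h1] at e1; rw [h2] at e2
      simp only [zero_mul] at e1 e2
      exact hwv (hinj w hwA v hv (Prod.ext (by omega) (by omega)))
    set j : ℤ := max |m1| |m2| with hjdef
    have hj1 : 1 ≤ j := by
      rcases hmne with h | h
      · exact le_trans (Int.one_le_abs h) (le_max_left _ _)
      · exact le_trans (Int.one_le_abs h) (le_max_right _ _)
    have hjr : (1:ℝ) ≤ (j:ℝ) := by exact_mod_cast hj1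
    -- distance from w to v
    have hwv_dist : ((j:ℝ) * (D:ℝ) - 1) * x ≤ dist2 w v := by
      have main : ∀ (a b : ℝ) (Δ : ℤ), Δ = ⌊a / x⌋ - ⌊b / x⌋ → |Δ| = j * (D:ℤ) →
          ((j:ℝ) * (D:ℝ) - 1) * x ≤ |a - b| := by
        intro a b Δ hΔ habs
        have hfg := floor_gap (a / x) (b / x)
        rw [← hΔ, habs] at hfg
        have hdivx : |a / x - b / x| = |a - b| / x := by
          rw [div_sub_div_same, abs_div, abs_of_pos hx0]
        rw [hdivx] at hfg
        push_cast at hfg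
        have h' : (j:ℝ) * (D:ℝ) - 1 ≤ |a - b| / x := by linarith
        calc ((j:ℝ) * (D:ℝ) - 1) * x ≤ (|a - b| / x) * x :=
              mul_le_mul_of_nonneg_right h' hx0.le
          _ = |a - b| := div_mul_cancel₀ _ hx0.ne'
      rcases max_cases |m1| |m2| with ⟨hmax, _⟩ | ⟨hmax, _⟩
      · have habs : |(boxIdx x w).1 - (boxIdx x v).1| = j * (D:ℤ) := by
          rw [← e1, abs_mul, abs_of_nonneg hDZ.le, hjdef, hmax]
        have := main w.1 v.1 _ rfl habs
        exact le_trans this (abs_fst_le_dist2 w v)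
      · have habs : |(boxIdx x w).2 - (boxIdx x v).2| = j * (D:ℤ) := by
          rw [← e2, abs_mul, abs_of_nonneg hDZ.le, hjdef, hmax]
        have := main w.2 v.2 _ rfl habs
        exact le_trans this (abs_snd_le_dist2 w v)
    -- distance from w to u
    have h1 : ((j:ℝ) * (D:ℝ) - 1) * x - 2 * Real.sqrt 2 * x ≤ dist2 w u := by
      have htri := dist2_triangle w u v
      rw [dist2_comm u v] at htri
      linarith
    have hcoef : ((j:ℝ) + 1) * (D:ℝ) / 4 ≤ (j:ℝ) * (D:ℝ) - 1 - 2 * Real.sqrt 2 := by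
      have hp : 0 ≤ ((j:ℝ) - 1) * (D:ℝ) := mul_nonneg (sub_nonneg.mpr hjr) hD0.le
      have he1 : ((j:ℝ) - 1) * (D:ℝ) = (j:ℝ) * (D:ℝ) - (D:ℝ) := by ring
      have he2 : ((j:ℝ) + 1) * (D:ℝ) = (j:ℝ) * (D:ℝ) + (D:ℝ) := by ring
      linarith
    have hwu : ((j:ℝ) + 1) * (D:ℝ) * x / 4 ≤ dist2 w u := by
      have h2 := mul_le_mul_of_nonneg_right hcoef hx0.le
      calc ((j:ℝ) + 1) * (D:ℝ) * x / 4 = (((j:ℝ) + 1) * (D:ℝ) / 4) * x := by ring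
        _ ≤ ((j:ℝ) * (D:ℝ) - 1 - 2 * Real.sqrt 2) * x := h2
        _ = ((j:ℝ) * (D:ℝ) - 1) * x - 2 * Real.sqrt 2 * x := by ring
        _ ≤ dist2 w u := h1
    have hj2 : (0:ℝ) < (j:ℝ) + 1 := by linarith
    have hpos4 : (0:ℝ) < ((j:ℝ) + 1) * (D:ℝ) * x / 4 := by
      apply div_pos _ (by norm_num)
      exact mul_pos (mul_pos hj2 hD0) hx0
    have hb1 : dist2 w u ^ (-α) ≤ (((j:ℝ) + 1) * (D:ℝ) * x / 4) ^ (-α) :=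
      Real.rpow_le_rpow_of_nonpos hpos4 hwu (by linarith)
    have hfac : (((j:ℝ) + 1) * (D:ℝ) * x / 4) ^ (-α)
        = ((D:ℝ) * x / 4) ^ (-α) * ((j:ℝ) + 1) ^ (-α) := by
      rw [show ((j:ℝ) + 1) * (D:ℝ) * x / 4 = ((D:ℝ) * x / 4) * ((j:ℝ) + 1) by ring,
        Real.mul_rpow (by positivity) (by linarith)]
    have hm1j : (|m1| : ℝ) ≤ (j:ℝ) := by exact_mod_cast (le_max_left |m1| |m2|)
    have hm2j : (|m2| : ℝ) ≤ (j:ℝ) := by exact_mod_cast (le_max_right |m1| |m2|)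
    have hma1 : (0:ℝ) ≤ (|m1| : ℝ) := by positivity
    have hma2 : (0:ℝ) ≤ (|m2| : ℝ) := by positivity
    have hkb : ((j:ℝ) + 1) ^ (-α) ≤ hk m1 * hk m2 := by
      have hprod : ((|m1|:ℝ) + 1) * ((|m2|:ℝ) + 1) ≤ ((j:ℝ) + 1) ^ 2 := by
        rw [sq]
        exact mul_le_mul (by linarith) (by linarith) (by linarith) (by linarith)
      have hppos : (0:ℝ) < ((|m1|:ℝ) + 1) * ((|m2|:ℝ) + 1) := by positivity
      calc ((j:ℝ) + 1) ^ (-α) = (((j:ℝ) + 1) ^ (2:ℕ)) ^ (-(α/2)) := by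
            rw [← Real.rpow_natCast ((j:ℝ) + 1) 2, ← Real.rpow_mul (by linarith)]
            congr 1
            push_cast
            ring
        _ ≤ (((|m1|:ℝ) + 1) * ((|m2|:ℝ) + 1)) ^ (-(α/2)) :=
            Real.rpow_le_rpow_of_nonpos hppos hprod (by linarith)
        _ = hk m1 * hk m2 := Real.mul_rpow (by positivity) (by positivity)
    calc dist2 w u ^ (-α) ≤ (((j:ℝ) + 1) * (D:ℝ) * x / 4) ^ (-α) := hb1
      _ = ((D:ℝ) * x / 4) ^ (-α) * ((j:ℝ) + 1) ^ (-α) := hfac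
      _ ≤ ((D:ℝ) * x / 4) ^ (-α) * (hk m1 * hk m2) :=
          mul_le_mul_of_nonneg_left hkb (Real.rpow_nonneg (by positivity) _)
  -- sum bound
  have hstep : ∑ w ∈ A.erase v, dist2 w u ^ (-α) ≤ ((D:ℝ)*x/4) ^ (-α) * K^2 := by
    have hinjm : ∀ w ∈ A.erase v, ∀ w' ∈ A.erase v, m w = m w' → w = w' := by
      intro w hw w' hw' hmm
      have hwA := (Finset.mem_erase.mp hw).2
      have hw'A := (Finset.mem_erase.mp hw').2
      obtain ⟨e1, e2⟩ := hmmul w hwA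
      obtain ⟨e1', e2'⟩ := hmmul w' hw'A
      have hmm1 : (m w).1 = (m w').1 := by rw [hmm]
      have hmm2 : (m w).2 = (m w').2 := by rw [hmm]
      apply hinj w hwA w' hw'A
      rw [hmm1] at e1; rw [hmm2] at e2
      exact Prod.ext (by omega) (by omega)
    set T : Finset (ℤ × ℤ) := (A.erase v).image m with hTdef
    calc ∑ w ∈ A.erase v, dist2 w u ^ (-α)
        ≤ ∑ w ∈ A.erase v, ((D:ℝ)*x/4) ^ (-α) * (hk (m w).1 * hk (m w).2) :=
          Finset.sum_le_sum key
      _ = ((D:ℝ)*x/4) ^ (-α) * ∑ w ∈ A.erase v, hk (m w).1 * hk (m w).2 :=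
          (Finset.mul_sum _ _ _).symm
      _ = ((D:ℝ)*x/4) ^ (-α) * ∑ p ∈ T, hk p.1 * hk p.2 := by
          rw [hTdef, Finset.sum_image hinjm]
      _ ≤ ((D:ℝ)*x/4) ^ (-α) * (K^2) := by
          apply mul_le_mul_of_nonneg_left _ (Real.rpow_nonneg (by positivity) _)
          calc ∑ p ∈ T, hk p.1 * hk p.2
              ≤ ∑ p ∈ (T.image Prod.fst) ×ˢ (T.image Prod.snd), hk p.1 * hk p.2 := by
                apply Finset.sum_le_sum_of_subset_of_nonneg
                · intro p hp
                  exact Finset.mem_product.mpr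
                    ⟨Finset.mem_image_of_mem _ hp, Finset.mem_image_of_mem _ hp⟩
                · intro p _ _
                  exact mul_nonneg (hkpos _) (hkpos _)
            _ = (∑ k ∈ T.image Prod.fst, hk k) * (∑ k ∈ T.image Prod.snd, hk k) := by
                rw [Finset.sum_product, Finset.sum_mul_sum]
            _ ≤ K * K := by
                apply mul_le_mul (hfinsum _) (hfinsum _)
                  (Finset.sum_nonneg fun k _ => hkpos k) (by linarith)
            _ = K^2 := (sq K).symm
  -- constant bound
  have hC : ((D:ℝ)*x/4) ^ (-α) * K^2 ≤ ε/(1+ε) * (2 * Real.sqrt 2 * x) ^ (-α) := by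
    have hfac : (D:ℝ)*x/4 = (2 * Real.sqrt 2 * x) * ((D:ℝ)/(8 * Real.sqrt 2)) := by
      field_simp
      ring
    have hq1 : (K^2*(1+ε)/ε) ^ (1/α) ≤ (D:ℝ)/(8 * Real.sqrt 2) := by
      rw [le_div_iff₀ (by positivity)]
      have h8 : 8 * Real.sqrt 2 * (K^2*(1+ε)/ε) ^ (1/α) ≤ d := le_max_right _ _
      calc (K^2*(1+ε)/ε) ^ (1/α) * (8 * Real.sqrt 2)
          = 8 * Real.sqrt 2 * (K^2*(1+ε)/ε) ^ (1/α) := by ring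
        _ ≤ d := h8
        _ ≤ (D:ℝ) := hdD
    have hq2 : ((D:ℝ)/(8 * Real.sqrt 2)) ^ (-α) ≤ ε/(K^2*(1+ε)) := by
      have h0 : ((K^2*(1+ε)/ε) ^ (1/α)) ^ (-α) = ε/(K^2*(1+ε)) := by
        rw [← Real.rpow_mul hq.le]
        rw [show (1/α) * (-α) = -1 by field_simp]
        rw [Real.rpow_neg_one]
        rw [inv_div]
      calc ((D:ℝ)/(8 * Real.sqrt 2)) ^ (-α)
          ≤ ((K^2*(1+ε)/ε) ^ (1/α)) ^ (-α) :=
            Real.rpow_le_rpow_of_nonpos (Real.rpow_pos_of_pos hq _) hq1 (by linarith)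
        _ = ε/(K^2*(1+ε)) := h0
    rw [hfac, Real.mul_rpow (by positivity) (by positivity)]
    calc (2 * Real.sqrt 2 * x) ^ (-α) * ((D:ℝ)/(8 * Real.sqrt 2)) ^ (-α) * K^2
        = (2 * Real.sqrt 2 * x) ^ (-α) * (((D:ℝ)/(8 * Real.sqrt 2)) ^ (-α) * K^2) := by
          ring
      _ ≤ (2 * Real.sqrt 2 * x) ^ (-α) * (ε/(K^2*(1+ε)) * K^2) := by
          apply mul_le_mul_of_nonneg_left _ (Real.rpow_nonneg (by positivity) _)
          exact mul_le_mul_of_nonneg_right hq2 (by positivity)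
      _ = ε/(1+ε) * (2 * Real.sqrt 2 * x) ^ (-α) := by
          field_simp
  -- lower bound on the left side
  have hLge : 1 + ε ≤ (2 * r / (c:ℝ)) ^ (-α) := by
    have h2rc : 2 * r / (c:ℝ) ≤ r := by
      rw [div_le_iff₀ hc0]
      have := mul_le_mul_of_nonneg_left hcR hr0.le
      linarith
    have hpos : (0:ℝ) < 2 * r / (c:ℝ) := by positivity
    have hmono : r ^ (-α) ≤ (2 * r / (c:ℝ)) ^ (-α) :=
      Real.rpow_le_rpow_of_nonpos hpos h2rc (by linarith)
    have hr' : r ^ (-α) = 1 + ε := by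
      rw [hrdef, ← Real.rpow_mul (by linarith : (0:ℝ) ≤ 1 + ε)]
      rw [show -(1/α) * (-α) = 1 by field_simp]
      exact Real.rpow_one _
    linarith
  -- conclude
  rw [ge_iff_le]
  have hfin : ∑ w ∈ A.erase v, dist2 w u ^ (-α) ≤ ε/(1+ε) * (2 * r / (c:ℝ)) ^ (-α) := by
    rw [hLx]
    exact le_trans hstep hC
  have hl : ε/(1+ε) * (2 * r / (c:ℝ)) ^ (-α) ≤ (2 * r / (c:ℝ)) ^ (-α) - 1 := by
    rw [div_mul_eq_mul_div, div_le_iff₀ (by linarith : (0:ℝ) < 1 + ε)]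
    have he : ((2 * r / (c:ℝ)) ^ (-α) - 1) * (1 + ε)
        = (2 * r / (c:ℝ)) ^ (-α) + ε * ((2 * r / (c:ℝ)) ^ (-α)) - 1 - ε := by ring
    linarith
  linarith
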